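/- The exponential generating function of the sequence p_n (the number of permutations of [n] all of whose left-to-right minima occur at odd positions, with p_0 = 1) is ∑_{n≥0} p_n x^n/n! = √((1+x)/(1-x)), as an identity of formal power series (equivalently, the square of the EGF equals (1+x)/(1-x) where 1/(1-x) = ∑ x^n). -/

import Mathlib

def lrmOddPerm (n : ℕ) (a : Equiv.Perm (Fin n)) : Prop :=
  ∀ i : Fin n, (∀ j : Fin n, j ≤ i → a i ≤ a j) → Odd (i.val + 1)

/-- The number of permutations of `[n]` all of whose left-to-right minima
occur at odd positions (so `permCount 0 = 1`). -/
noncomputable def permCount (n : ℕ) : ℕ :=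
  Nat.card {a : Equiv.Perm (Fin n) // lrmOddPerm n a}

/-- The exponential generating function `∑ pₙ xⁿ/n!` of `permCount`. -/
noncomputable def egfP : PowerSeries ℚ :=
  PowerSeries.mk fun n => (permCount n : ℚ) / n.factorial

namespace LrmAux

open Equiv Finset

/-- Insert the value `v` at the last position of the pattern `b`. -/
def insLast {n : ℕ} (b : Equiv.Perm (Fin n)) (v : Fin (n + 1)) : Equiv.Perm (Fin (n + 1)) :=
  (finSuccEquiv' (Fin.last n)).trans ((b.optionCongr).trans (finSuccEquiv' v).symm)

@[simp] lemma insLast_last {n : ℕ} (b : Equiv.Perm (Fin n)) (v : Fin (n + 1)) :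
    insLast b v (Fin.last n) = v := by
  simp [insLast, finSuccEquiv'_at, finSuccEquiv'_symm_none]

@[simp] lemma insLast_castSucc {n : ℕ} (b : Equiv.Perm (Fin n)) (v : Fin (n + 1)) (i : Fin n) :
    insLast b v i.castSucc = v.succAbove (b i) := by
  have h : finSuccEquiv' (Fin.last n) i.castSucc = some i := by
    rw [← Fin.succAbove_last, finSuccEquiv'_succAbove]
  simp [insLast, h, finSuccEquiv'_symm_some]

lemma insLast_bijective (n : ℕ) :
    Function.Bijective (fun p : Equiv.Perm (Fin n) × Fin (n + 1) => insLast p.1 p.2) := by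
  rw [Fintype.bijective_iff_injective_and_card]
  constructor
  · rintro ⟨b, v⟩ ⟨b', v'⟩ h
    simp only at h
    have hv : v = v' := by
      have := congrArg (fun e : Equiv.Perm (Fin (n+1)) => e (Fin.last n)) h
      simpa using this
    subst hv
    have hb : b = b' := by
      ext i
      have := congrArg (fun e : Equiv.Perm (Fin (n+1)) => e i.castSucc) h
      simp only [insLast_castSucc] at this
      exact congrArg Fin.val (Fin.succAbove_right_injective this)
    simp [hb]
  · simp [Fintype.card_perm, Nat.factorial_succ, mul_comm]

/-- The key condition transfer lemma. -/
lemma lrm_insLast_iff {n : ℕ} (b : Equiv.Perm (Fin n)) (v : Fin (n + 1)) :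
    lrmOddPerm (n + 1) (insLast b v) ↔ (lrmOddPerm n b ∧ (Odd (n + 1) ∨ v ≠ 0)) := by
  constructor
  · intro H
    constructor
    · intro i hi
      have h1 : ∀ j : Fin (n+1), j ≤ i.castSucc → insLast b v i.castSucc ≤ insLast b v j := by
        intro j hj
        induction j using Fin.lastCases with
        | last =>
          exact absurd (lt_of_le_of_lt hj (Fin.castSucc_lt_last i)) (lt_irrefl _)
        | cast j' =>
          rw [insLast_castSucc, insLast_castSucc, Fin.succAbove_le_succAbove_iff]
          exact hi j' (Fin.castSucc_le_castSucc_iff.mp hj)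
      have := H i.castSucc h1
      simpa using this
    · by_cases hv : v = 0
      · left
        subst hv
        have h1 : ∀ j : Fin (n+1), j ≤ Fin.last n → insLast b 0 (Fin.last n) ≤ insLast b 0 j := by
          intro j _
          simp [Fin.zero_le]
        have := H (Fin.last n) h1
        simpa using this
      · right; exact hv
  · rintro ⟨hb, hv⟩ i hi
    induction i using Fin.lastCases with
    | last =>
      rcases hv with h | h
      · simpa using h
      · exfalso
        apply h
        have h0 := hi ((insLast b v).symm 0) (Fin.le_last _)
        rw [Equiv.apply_symm_apply, insLast_last] at h0
        exact Fin.le_zero_iff.mp h0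
    | cast i' =>
      have hb' : ∀ j' : Fin n, j' ≤ i' → b i' ≤ b j' := by
        intro j' hj'
        have := hi j'.castSucc (Fin.castSucc_le_castSucc_iff.mpr hj')
        rw [insLast_castSucc, insLast_castSucc, Fin.succAbove_le_succAbove_iff] at this
        exact this
      simpa using hb i' hb'

lemma permCount_succ (n : ℕ) :
    permCount (n + 1) = permCount n * Nat.card {v : Fin (n + 1) // Odd (n + 1) ∨ v ≠ 0} := by
  classical
  set Φ : (Equiv.Perm (Fin n) × Fin (n + 1)) ≃ Equiv.Perm (Fin (n + 1)) :=
    Equiv.ofBijective _ (insLast_bijective n) with hΦ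
  have e1 : {p : Equiv.Perm (Fin n) × Fin (n + 1) //
      lrmOddPerm n p.1 ∧ (Odd (n + 1) ∨ p.2 ≠ 0)} ≃ {a // lrmOddPerm (n + 1) a} :=
    Equiv.subtypeEquiv Φ (fun p => (lrm_insLast_iff p.1 p.2).symm)
  rw [permCount, ← Nat.card_congr e1, Nat.card_congr (Equiv.subtypeProdEquivProd (p := lrmOddPerm n)
      (q := fun v : Fin (n + 1) => Odd (n + 1) ∨ v ≠ 0)), Nat.card_prod]
  rfl

lemma permCount_zero : permCount 0 = 1 := by
  have h : ∀ a : Equiv.Perm (Fin 0), lrmOddPerm 0 a := fun a i => i.elim0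
  rw [permCount, Nat.card_congr (Equiv.subtypeUnivEquiv h), Nat.card_eq_fintype_card]
  simp [Fintype.card_perm]

lemma permCount_one : permCount 1 = 1 := by
  have h : ∀ a : Equiv.Perm (Fin 1), lrmOddPerm 1 a := by
    intro a i _
    have : i.val = 0 := by omega
    simp [this]
  rw [permCount, Nat.card_congr (Equiv.subtypeUnivEquiv h), Nat.card_eq_fintype_card]
  simp [Fintype.card_perm]

lemma permCount_succ_even {n : ℕ} (hn : Even n) : permCount (n + 1) = (n + 1) * permCount n := by
  rw [permCount_succ]
  have hodd : Odd (n + 1) := Even.add_one hn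
  have : Nat.card {v : Fin (n + 1) // Odd (n + 1) ∨ v ≠ 0} = n + 1 := by
    rw [Nat.card_congr (Equiv.subtypeUnivEquiv (fun v => Or.inl hodd)),
      Nat.card_eq_fintype_card, Fintype.card_fin]
  rw [this, mul_comm]

lemma permCount_succ_odd {n : ℕ} (hn : Odd n) : permCount (n + 1) = n * permCount n := by
  rw [permCount_succ]
  have hnodd : ¬ Odd (n + 1) := by simp [Nat.odd_add_one, Nat.not_even_iff_odd, hn]
  have : Nat.card {v : Fin (n + 1) // Odd (n + 1) ∨ v ≠ 0} = n := by
    rw [Nat.card_congr (Equiv.subtypeEquivRight (q := fun v : Fin (n+1) => ¬ (v = 0))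
      (fun v => by simp [hnodd]))]
    rw [Nat.card_eq_fintype_card, Fintype.card_subtype_compl, Fintype.card_subtype_eq,
      Fintype.card_fin]
    omega
  rw [this, mul_comm]

/-- The coefficients `pₙ/n!` of the EGF. -/
noncomputable def c (n : ℕ) : ℚ := (permCount n : ℚ) / n.factorial

lemma c_zero : c 0 = 1 := by simp [c, permCount_zero]

lemma c_one : c 1 = 1 := by simp [c, permCount_one]

lemma crec (n : ℕ) : ((n : ℚ) + 2) * c (n + 2) = c (n + 1) + n * c n := by
  have hf0 : ((n.factorial : ℚ)) ≠ 0 := Nat.cast_ne_zero.mpr n.factorial_ne_zero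
  have h1 : ((n + 1 : ℕ) : ℚ) ≠ 0 := by positivity
  have h2 : ((n + 2 : ℕ) : ℚ) ≠ 0 := by positivity
  have hf1 : (((n + 1).factorial : ℚ)) = (n + 1) * n.factorial := by
    push_cast [Nat.factorial_succ]; ring
  have hf2 : (((n + 2).factorial : ℚ)) = (n + 2) * ((n + 1) * n.factorial) := by
    rw [Nat.factorial_succ]
    push_cast [Nat.factorial_succ]; ring
  rcases Nat.even_or_odd n with hn | hn
  · have e1 : ((permCount (n + 1) : ℚ)) = (n + 1) * permCount n := by
      rw [permCount_succ_even hn]; push_cast; ring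
    have e2 : ((permCount (n + 2) : ℚ)) = (n + 1) * permCount (n + 1) := by
      rw [permCount_succ_odd (Even.add_one hn)]; push_cast; ring
    simp only [c, hf2, hf1, e2, e1]
    field_simp
    ring
  · have e1 : ((permCount (n + 1) : ℚ)) = n * permCount n := by
      rw [permCount_succ_odd hn]; push_cast; ring
    have e2 : ((permCount (n + 2) : ℚ)) = (n + 2) * permCount (n + 1) := by
      rw [permCount_succ_even (Odd.add_one hn)]; push_cast; ring
    simp only [c, hf2, hf1, e2, e1]
    field_simp
    ring

lemma crec' (j : ℕ) : ((j : ℚ) + 1) * c (j + 1) = c j + ((j - 1 : ℕ) : ℚ) * c (j - 1) := by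
  cases j with
  | zero => simp [c_zero, c_one]
  | succ m =>
    simp only [Nat.add_sub_cancel]
    push_cast
    linear_combination crec m

/-- The convolution `∑ cᵢ c_{n-i}`. -/
noncomputable def T (n : ℕ) : ℚ := ∑ i ∈ Finset.range (n + 1), c i * c (n - i)

lemma T_def (n : ℕ) : T n = ∑ i ∈ Finset.range (n + 1), c i * c (n - i) := rfl

/-- The weighted convolution `∑ i cᵢ c_{n-i}`. -/
noncomputable def U (n : ℕ) : ℚ := ∑ i ∈ Finset.range (n + 1), (i : ℚ) * (c i * c (n - i))

lemma U_def (n : ℕ) : U n = ∑ i ∈ Finset.range (n + 1), (i : ℚ) * (c i * c (n - i)) := rfl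

lemma U_reflect (n : ℕ) :
    U n = ∑ i ∈ Finset.range (n + 1), ((n - i : ℕ) : ℚ) * (c (n - i) * c i) := by
  rw [U_def, ← Finset.sum_range_reflect]
  simp only [Nat.add_sub_cancel]
  apply Finset.sum_congr rfl
  intro i hi
  have hi' : i ≤ n := by simpa [Nat.lt_succ_iff] using hi
  rw [Nat.sub_sub_self hi']

lemma two_U (n : ℕ) : 2 * U n = n * T n := by
  have h : 2 * U n = U n + U n := by ring
  rw [h]
  nth_rewrite 2 [U_reflect]
  rw [U_def, T_def, ← Finset.sum_add_distrib, Finset.mul_sum]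
  apply Finset.sum_congr rfl
  intro i hi
  have hi' : i ≤ n := by simpa [Nat.lt_succ_iff] using hi
  have hc : ((n - i : ℕ) : ℚ) = (n : ℚ) - i := by
    push_cast [Nat.cast_sub hi']; ring
  rw [hc]
  ring

lemma U_succ_succ (n : ℕ) : U (n + 2) = T (n + 1) + U n := by
  rw [U_def, Finset.sum_range_succ']
  simp only [Nat.cast_zero, zero_mul, add_zero]
  have step : ∀ j ∈ Finset.range (n + 2),
      ((j + 1 : ℕ) : ℚ) * (c (j + 1) * c (n + 2 - (j + 1))) =
      c j * c (n + 1 - j) + ((j - 1 : ℕ) : ℚ) * (c (j - 1) * c (n + 1 - j)) := by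
    intro j _
    have h1 : n + 2 - (j + 1) = n + 1 - j := by omega
    rw [h1]
    have h2 := congrArg (fun t => t * c (n + 1 - j)) (crec' j)
    push_cast at h2 ⊢
    linear_combination h2
  rw [Finset.sum_congr rfl step, Finset.sum_add_distrib]
  congr 1
  rw [Finset.sum_range_succ']
  simp only [Nat.zero_sub, Nat.cast_zero, zero_mul, add_zero]
  rw [U_def]
  apply Finset.sum_congr rfl
  intro k _
  have h1 : k + 1 - 1 = k := by omega
  have h2 : n + 1 - (k + 1) = n - k := by omega
  rw [h1, h2]

lemma T_rec (n : ℕ) : ((n : ℚ) + 2) * T (n + 2) = 2 * T (n + 1) + n * T n := by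
  have key : ((n : ℚ) + 2) * T (n + 2) = 2 * U (n + 2) := by
    rw [two_mul]
    nth_rewrite 2 [U_reflect]
    rw [T_def, U_def, Finset.mul_sum, ← Finset.sum_add_distrib]
    apply Finset.sum_congr rfl
    intro i hi
    have hi' : i ≤ n + 2 := by simpa [Nat.lt_succ_iff] using hi
    have hc : ((n + 2 - i : ℕ) : ℚ) = (n : ℚ) + 2 - i := by
      push_cast [Nat.cast_sub hi']; ring
    rw [hc]
    ring
  rw [key, U_succ_succ]
  linear_combination two_U n

lemma T_zero : T 0 = 1 := by simp [T, c_zero]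

lemma T_one : T 1 = 2 := by
  rw [T]
  simp [Finset.sum_range_succ, c_zero, c_one]
  norm_num

lemma T_pos (n : ℕ) : T (n + 1) = 2 := by
  have key : ∀ n : ℕ, T (n + 1) = 2 ∧ T (n + 2) = 2 := by
    intro n
    induction n with
    | zero =>
      refine ⟨T_one, ?_⟩
      have := T_rec 0
      rw [T_one] at this
      push_cast at this
      linarith
    | succ m ih =>
      refine ⟨ih.2, ?_⟩
      have h := T_rec (m + 1)
      rw [ih.1, ih.2] at h
      have hm : ((m : ℚ) + 1 + 2) ≠ 0 := by positivity
      push_cast at h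
      have h2 : ((m : ℚ) + 1 + 2) * T (m + 1 + 2) = ((m : ℚ) + 1 + 2) * 2 := by linarith
      exact mul_left_cancel₀ hm h2
  exact (key n).1

lemma coeff_egfP (n : ℕ) : PowerSeries.coeff n egfP = c n := by
  simp [egfP, c, PowerSeries.coeff_mk]

end LrmAux

/-- `(∑ pₙ xⁿ/n!)² = (1+x)/(1-x)`, where `1/(1-x) = ∑ xⁿ`. -/
theorem egfP_sq :
    egfP ^ 2 = (1 + PowerSeries.X) * PowerSeries.mk (fun _ => (1 : ℚ)) := by
  open LrmAux in
  ext n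
  have hL : PowerSeries.coeff n (egfP ^ 2) = T n := by
    rw [pow_two, PowerSeries.coeff_mul, Finset.Nat.sum_antidiagonal_eq_sum_range_succ_mk, T_def]
    apply Finset.sum_congr rfl
    intro i _
    simp [coeff_egfP]
  have hR : PowerSeries.coeff n ((1 + PowerSeries.X) * PowerSeries.mk (fun _ => (1 : ℚ))) =
      if n = 0 then 1 else 2 := by
    rw [add_mul, one_mul, map_add]
    cases n with
    | zero => simp
    | succ m =>
      rw [PowerSeries.coeff_succ_X_mul]
      simp only [PowerSeries.coeff_mk, Nat.succ_ne_zero, if_false]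
      norm_num
  rw [hL, hR]
  cases n with
  | zero => simp [T_zero]
  | succ m => simp [T_pos]
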